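/- Let u(t,x) be bounded and continuous, φ ∈ C_b³([0,T)×ℝᵈ) with 0 = u(t₀,x₀) − φ(t₀,x₀) = min_{(t,x)} (u−φ)(t,x), and suppose the dynamic programming principle φ(t₀,x₀) ≥ sup_{P} Y_{t₀}^{P,t₀,x₀}(t₀+η, φ(t₀+η, B_{t₀+η}^{t₀,x₀})) holds for all small η > 0. Suppose moreover that for each constant pair (a,ν) ∈ D¹_f × (D²_f ∩ 𝔙^m) there exists a measure P(a,ν) in the class under which the characteristics of B equal (a,ν). If, for a positive càdlàg weight process M' with all moments of its supremum finite, the estimate ℒ^{t₀,x₀}φ(t₀,a,ν)·∫_{t₀}^{t₀+η} E^{P(a,ν)}[M'_s] ds ≤ C·η·(ρ(η) + ρ^{1/2}(√η) + η + η^{1/2}) holds, then dividing by η and letting η → 0 yields ℒ^{t₀,x₀}φ(t₀,a,ν) ≤ 0 for every (a,ν); taking the supremum over (a,ν) shows that u is a viscosity supersolution at (t₀,x₀) of −∂_t φ − ĥ(t₀,x₀,φ,Dφ,𝒦φ,D²φ,φ(t₀,x₀+·)) ≥ 0. -/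

import Mathlib

open Filter Set MeasureTheory Topology

/-- `Tr(a D²ψ(x))`: the trace of the product of the matrix `a` with the Hessian of `ψ`
at `x`, written in the canonical basis of `ℝᵈ`. -/
noncomputable def trHess {d : ℕ} (a : Matrix (Fin d) (Fin d) ℝ)
    (ψ : EuclideanSpace ℝ (Fin d) → ℝ) (x : EuclideanSpace ℝ (Fin d)) : ℝ :=
  ∑ i, ∑ j, a i j *
    fderiv ℝ (fun y => fderiv ℝ ψ y (EuclideanSpace.single j (1 : ℝ))) x
      (EuclideanSpace.single i (1 : ℝ))

/-- The operator `ℒ^{t₀,x₀}φ(t₀,a,ν) := ∂_tφ(t₀,x₀) + ½Tr(a D²φ(t₀,x₀))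
+ ∫_E (Aφ)(x₀,e) ν(de) − f(t₀,x₀,φ(t₀,x₀),Dφ(t₀,x₀),𝒦φ(t₀,x₀,·),a,ν)`, where
`(Aφ)(x,e) = φ(x+e) − φ(x) − e·∇φ(x)` and `𝒦φ(t,x,e) = φ(t,x+e) − φ(t,x)`. -/
noncomputable def opL {d : ℕ} (φ : ℝ → EuclideanSpace ℝ (Fin d) → ℝ)
    (f : ℝ → EuclideanSpace ℝ (Fin d) → ℝ → EuclideanSpace ℝ (Fin d) →
          (EuclideanSpace ℝ (Fin d) → ℝ) → Matrix (Fin d) (Fin d) ℝ →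
          Measure (EuclideanSpace ℝ (Fin d)) → ℝ)
    (t₀ : ℝ) (x₀ : EuclideanSpace ℝ (Fin d))
    (a : Matrix (Fin d) (Fin d) ℝ) (ν : Measure (EuclideanSpace ℝ (Fin d))) : ℝ :=
  deriv (fun s => φ s x₀) t₀ + (1 / 2) * trHess a (φ t₀) x₀ +
    (∫ e, (φ t₀ (x₀ + e) - φ t₀ x₀ - fderiv ℝ (φ t₀) x₀ e) ∂ν) -
    f t₀ x₀ (φ t₀ x₀) (gradient (φ t₀) x₀) (fun e => φ t₀ (x₀ + e) - φ t₀ x₀) a ν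

/-- Derivation of the viscosity supersolution property.  Let `u` be bounded continuous,
`φ ∈ C³` touching `u` from below at the minimum point `(t₀, x₀)` of `u − φ`; suppose the
dynamic programming principle yields, for each constant pair `(a,ν) ∈ D¹ × D²`, a measure
`P(a,ν)` of the class together with a positive càdlàg weight `M'` (with integrable
supremum) such that `ℒ^{t₀,x₀}φ(t₀,a,ν) ∫_{t₀}^{t₀+η} E[M'_s] ds ≤
C η (ρ(η) + ρ^{1/2}(√η) + η + √η)` for all small `η > 0`.  Then, dividing by `η` and
letting `η → 0`, `ℒ^{t₀,x₀}φ(t₀,a,ν) ≤ 0` for every `(a,ν)`, and taking the supremum over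
`(a,ν)` yields the supersolution inequality `−∂_tφ(t₀,x₀) − ĥ(t₀,x₀,…) ≥ 0`. -/
theorem stmt15 {d : ℕ} (T t₀ η₀ Cc : ℝ) (x₀ : EuclideanSpace ℝ (Fin d))
    (ht₀ : t₀ < T) (hη₀ : 0 < η₀) (hη₀T : t₀ + η₀ ≤ T)
    (u φ : ℝ → EuclideanSpace ℝ (Fin d) → ℝ)
    (f : ℝ → EuclideanSpace ℝ (Fin d) → ℝ → EuclideanSpace ℝ (Fin d) →
          (EuclideanSpace ℝ (Fin d) → ℝ) → Matrix (Fin d) (Fin d) ℝ →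
          Measure (EuclideanSpace ℝ (Fin d)) → ℝ)
    (ρ : ℝ → ℝ) (hρmono : Monotone ρ) (hρnn : ∀ r, 0 ≤ ρ r)
    (hρ0 : Tendsto ρ (𝓝[>] 0) (𝓝 0))
    (D1 : Set (Matrix (Fin d) (Fin d) ℝ))
    (D2 : Set (Measure (EuclideanSpace ℝ (Fin d))))
    (hD1 : D1.Nonempty) (hD2 : D2.Nonempty)
    (hu_cont : Continuous fun p : ℝ × EuclideanSpace ℝ (Fin d) => u p.1 p.2)
    (hu_bdd : ∃ Kb : ℝ, ∀ t x, |u t x| ≤ Kb)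
    (hφ : ContDiff ℝ 3 fun p : ℝ × EuclideanSpace ℝ (Fin d) => φ p.1 p.2)
    (hφ_bdd : ∃ Kb : ℝ, ∀ t x, |φ t x| ≤ Kb)
    (htouch : u t₀ x₀ = φ t₀ x₀) (hmin : ∀ t x, φ t x ≤ u t x)
    (hintν : ∀ ν ∈ D2, Integrable
        (fun e => φ t₀ (x₀ + e) - φ t₀ x₀ - fderiv ℝ (φ t₀) x₀ e) ν)
    (hEst : ∀ a ∈ D1, ∀ ν ∈ D2,
      ∃ (Ω' : Type) (mΩ : MeasurableSpace Ω') (μ : @Measure Ω' mΩ)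
        (M' : ℝ → Ω' → ℝ),
        IsProbabilityMeasure μ ∧
        (∀ s ω, 0 < M' s ω) ∧
        (∀ ω s, ContinuousWithinAt (fun r => M' r ω) (Set.Ici s) s) ∧
        (∀ ω, BddAbove (Set.range fun s : Set.Icc t₀ T => M' (s : ℝ) ω)) ∧
        Integrable (fun ω => ⨆ s : Set.Icc t₀ T, M' (s : ℝ) ω) μ ∧
        (∀ s, Integrable (M' s) μ) ∧
        IntervalIntegrable (fun s => ∫ ω, M' s ω ∂μ) MeasureTheory.volume t₀ (t₀ + η₀) ∧
        (∀ η : ℝ, 0 < η → η < η₀ →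
          opL φ f t₀ x₀ a ν * ∫ s in t₀..(t₀ + η), (∫ ω, M' s ω ∂μ) ≤
            Cc * η * (ρ η + Real.sqrt (ρ (Real.sqrt η)) + η + Real.sqrt η))) :
    (∀ a ∈ D1, ∀ ν ∈ D2, opL φ f t₀ x₀ a ν ≤ 0) ∧
    0 ≤ -(deriv (fun s => φ s x₀) t₀) -
        sSup {r : ℝ | ∃ a ∈ D1, ∃ ν ∈ D2,
          r = (1 / 2) * trHess a (φ t₀) x₀ +
              (∫ e, (φ t₀ (x₀ + e) - φ t₀ x₀ - fderiv ℝ (φ t₀) x₀ e) ∂ν) -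
              f t₀ x₀ (φ t₀ x₀) (gradient (φ t₀) x₀)
                (fun e => φ t₀ (x₀ + e) - φ t₀ x₀) a ν} := by

  have key : ∀ a ∈ D1, ∀ ν ∈ D2, opL φ f t₀ x₀ a ν ≤ 0 := by
    intro a ha ν hν
    obtain ⟨Ω', mΩ, μ, M', hprob, hpos, hrc, hbdd, hsupint, hint, hII, hest⟩ := hEst a ha ν hν
    set L := opL φ f t₀ x₀ a ν with hL
    set g : ℝ → ℝ := fun s => ∫ ω, M' s ω ∂μ with hgdef
    -- g t₀ > 0
    have hg0 : 0 < g t₀ := by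
      rw [hgdef]
      rw [MeasureTheory.integral_pos_iff_support_of_nonneg_ae
        (Filter.Eventually.of_forall fun ω => (hpos t₀ ω).le) (hint t₀)]
      have : Function.support (M' t₀) = Set.univ :=
        Set.eq_univ_of_forall fun ω => Function.mem_support.mpr (hpos t₀ ω).ne'
      rw [this]
      simp [hprob.measure_univ]
    -- right continuity of g at t₀
    have hgc : Tendsto g (𝓝[≥] t₀) (𝓝 (g t₀)) := by
      have hIcc : Set.Icc t₀ T ∈ 𝓝[≥] t₀ := by
        have : Set.Ico t₀ T ∈ 𝓝[≥] t₀ := Ico_mem_nhdsGE_of_mem ⟨le_rfl, ht₀⟩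
        exact Filter.mem_of_superset this Set.Ico_subset_Icc_self
      refine MeasureTheory.tendsto_integral_filter_of_dominated_convergence
        (fun ω => ⨆ s : Set.Icc t₀ T, M' (s : ℝ) ω)
        (Filter.Eventually.of_forall fun s => (hint s).aestronglyMeasurable)
        ?_ hsupint ?_
      · filter_upwards [hIcc] with s hs
        refine Filter.Eventually.of_forall fun ω => ?_
        rw [Real.norm_eq_abs, abs_of_pos (hpos s ω)]
        exact le_ciSup (hbdd ω) (⟨s, hs⟩ : Set.Icc t₀ T)
      · exact Filter.Eventually.of_forall fun ω => hrc ω t₀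
    -- g eventually ≥ g t₀ / 2 on a right interval
    have hev : {s | g t₀ / 2 < g s} ∈ 𝓝[≥] t₀ :=
      hgc.eventually (eventually_gt_nhds (by linarith))
    obtain ⟨v, hv, hIco⟩ := (mem_nhdsGE_iff_exists_Ico_subset).mp hev
    by_contra hLpos
    push_neg at hLpos
    -- eventually L ≤ Cc * R η / (g t₀ / 2)
    have hevsmall : ∀ᶠ η in 𝓝[>] (0:ℝ),
        L ≤ Cc * (ρ η + Real.sqrt (ρ (Real.sqrt η)) + η + Real.sqrt η) / (g t₀ / 2) := by
      have hmem : Set.Ioo (0:ℝ) (min η₀ (v - t₀)) ∈ 𝓝[>] (0:ℝ) := by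
        apply Ioo_mem_nhdsGT_of_mem
        constructor
        · rfl
        · exact lt_min hη₀ (by simpa using hv)
      filter_upwards [hmem] with η hη
      obtain ⟨hη0, hηlt⟩ := hη
      have hηη₀ : η < η₀ := lt_of_lt_of_le hηlt (min_le_left _ _)
      have hηv : t₀ + η < v := by
        have := lt_of_lt_of_le hηlt (min_le_right _ _); linarith
      -- lower bound on the interval integral
      have hgint : IntervalIntegrable g MeasureTheory.volume t₀ (t₀ + η) := by
        apply hII.mono_set
        rw [Set.uIcc_of_le (by linarith), Set.uIcc_of_le (by linarith)]
        exact Set.Icc_subset_Icc le_rfl (by linarith)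
      have hlow : η * (g t₀ / 2) ≤ ∫ s in t₀..(t₀ + η), g s := by
        have h1 : ∫ s in t₀..(t₀ + η), (g t₀ / 2) ≤ ∫ s in t₀..(t₀ + η), g s := by
          apply intervalIntegral.integral_mono_on (by linarith)
            intervalIntegrable_const hgint
          intro s hs
          exact (hIco ⟨hs.1, lt_of_le_of_lt hs.2 hηv⟩).le
        rwa [intervalIntegral.integral_const, smul_eq_mul, add_sub_cancel_left] at h1
      have hkey := hest η hη0 hηη₀
      have h2 : L * (η * (g t₀ / 2)) ≤
          Cc * η * (ρ η + Real.sqrt (ρ (Real.sqrt η)) + η + Real.sqrt η) :=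
        le_trans (mul_le_mul_of_nonneg_left hlow hLpos.le) hkey
      have hc : 0 < g t₀ / 2 := by linarith
      rw [le_div_iff₀ hc]
      have h3 : L * (g t₀ / 2) * η ≤
          Cc * (ρ η + Real.sqrt (ρ (Real.sqrt η)) + η + Real.sqrt η) * η := by
        calc L * (g t₀ / 2) * η = L * (η * (g t₀ / 2)) := by ring
        _ ≤ Cc * η * (ρ η + Real.sqrt (ρ (Real.sqrt η)) + η + Real.sqrt η) := h2
        _ = Cc * (ρ η + Real.sqrt (ρ (Real.sqrt η)) + η + Real.sqrt η) * η := by ring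
      exact le_of_mul_le_mul_right h3 hη0
    -- the RHS tends to 0
    have hsqrt_tendsto : Tendsto Real.sqrt (𝓝[>] (0:ℝ)) (𝓝[>] (0:ℝ)) := by
      apply tendsto_nhdsWithin_of_tendsto_nhds_of_eventually_within
      · have := Real.continuous_sqrt.continuousAt (x := (0:ℝ))
        simpa [Real.sqrt_zero] using (this.tendsto.mono_left nhdsWithin_le_nhds)
      · filter_upwards [self_mem_nhdsWithin] with x hx
        exact Real.sqrt_pos.mpr hx
    have ht1 : Tendsto (fun η : ℝ => Real.sqrt (ρ (Real.sqrt η))) (𝓝[>] (0:ℝ)) (𝓝 0) := by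
      have h1 : Tendsto (fun η : ℝ => ρ (Real.sqrt η)) (𝓝[>] (0:ℝ)) (𝓝 0) :=
        hρ0.comp hsqrt_tendsto
      have h2 := (Real.continuous_sqrt.continuousAt (x := (0:ℝ))).tendsto
      simpa [Real.sqrt_zero, Function.comp_def] using h2.comp h1
    have ht2 : Tendsto (fun η : ℝ => Real.sqrt η) (𝓝[>] (0:ℝ)) (𝓝 0) :=
      tendsto_nhds_of_tendsto_nhdsWithin hsqrt_tendsto
    have ht3 : Tendsto (fun η : ℝ => η) (𝓝[>] (0:ℝ)) (𝓝 0) :=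
      tendsto_id.mono_left nhdsWithin_le_nhds
    have htend : Tendsto
        (fun η : ℝ => Cc * (ρ η + Real.sqrt (ρ (Real.sqrt η)) + η + Real.sqrt η) / (g t₀ / 2))
        (𝓝[>] (0:ℝ)) (𝓝 0) := by
      have : Tendsto
          (fun η : ℝ => Cc * (ρ η + Real.sqrt (ρ (Real.sqrt η)) + η + Real.sqrt η) / (g t₀ / 2))
          (𝓝[>] (0:ℝ)) (𝓝 (Cc * (0 + 0 + 0 + 0) / (g t₀ / 2))) := by
        exact (((hρ0.add ht1).add ht3).add ht2).const_mul Cc |>.div_const _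
      simpa using this
    have : L ≤ 0 := ge_of_tendsto htend hevsmall
    linarith
  refine ⟨key, ?_⟩
  set S := {r : ℝ | ∃ a ∈ D1, ∃ ν ∈ D2,
      r = (1 / 2) * trHess a (φ t₀) x₀ +
          (∫ e, (φ t₀ (x₀ + e) - φ t₀ x₀ - fderiv ℝ (φ t₀) x₀ e) ∂ν) -
          f t₀ x₀ (φ t₀ x₀) (gradient (φ t₀) x₀)
            (fun e => φ t₀ (x₀ + e) - φ t₀ x₀) a ν} with hS
  obtain ⟨a₀, ha₀⟩ := hD1
  obtain ⟨ν₀, hν₀⟩ := hD2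
  have hne : S.Nonempty := ⟨_, a₀, ha₀, ν₀, hν₀, rfl⟩
  have hub : ∀ r ∈ S, r ≤ -(deriv (fun s => φ s x₀) t₀) := by
    rintro r ⟨a, ha, ν, hν, rfl⟩
    have h := key a ha ν hν
    rw [opL] at h
    linarith
  have := csSup_le hne hub
  linarith
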